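/- Every thin block of finite subsets of ℕ is well-ordered by the lexicographic order; in particular, every barrier is well-ordered by the lexicographic order. -/

import Mathlib

open Set

/-- `s` is an initial segment of the finite set `t` (w.r.t. increasing enumerations). -/
def InitSeg (s t : Finset ℕ) : Prop :=
  s ⊆ t ∧ ∀ x ∈ s, ∀ y ∈ t, y ∉ s → x < y

/-- `s` is an initial segment of the set `X ⊆ ℕ`. -/
def InitSegSet (s : Finset ℕ) (X : Set ℕ) : Prop :=
  ↑s ⊆ X ∧ ∀ x ∈ s, ∀ y ∈ X, y ∉ s → x < y

/-- The union of a family of finite subsets of `ℕ`. -/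
def unionOf (B : Set (Finset ℕ)) : Set ℕ := ⋃ s ∈ B, (s : Set ℕ)

/-- `B` is a block: `B` is infinite and every infinite subset of `⋃ B` has a nonempty
initial segment belonging to `B`. -/
def IsBlock (B : Set (Finset ℕ)) : Prop :=
  B.Infinite ∧ ∀ X : Set ℕ, X ⊆ unionOf B → X.Infinite →
    ∃ s ∈ B, s.Nonempty ∧ InitSegSet s X

/-- `B` is a barrier: a block no member of which is a proper subset of another member. -/
def IsBarrier (B : Set (Finset ℕ)) : Prop :=
  IsBlock B ∧ ∀ s ∈ B, ∀ t ∈ B, s ⊆ t → s = t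

/-- `B` is a thin block: a block which is an antichain under the initial-segment order. -/
def IsThinBlock (B : Set (Finset ℕ)) : Prop :=
  IsBlock B ∧ ∀ s ∈ B, ∀ t ∈ B, InitSeg s t → s = t

/-- `s ◁ t`: there is `r` such that `s` is a proper initial segment of `r` and `t` is
obtained from `r` by removing its least element. -/
def Tri (s t : Finset ℕ) : Prop :=
  ∃ r : Finset ℕ, InitSeg s r ∧ s ≠ r ∧ ∃ a ∈ r, (∀ b ∈ r, a ≤ b) ∧ t = r.erase a

/-- The map `f` is good on `B` w.r.t. the quasi-order `le`. -/
def GoodPair {Q : Type*} (le : Q → Q → Prop) (B : Set (Finset ℕ)) (f : Finset ℕ → Q) : Prop :=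
  ∃ s ∈ B, ∃ t ∈ B, Tri s t ∧ le (f s) (f t)

/-- A quasi-order is better-quasi-ordered if every map from every barrier into it is good. -/
def IsBqo {Q : Type*} (le : Q → Q → Prop) : Prop :=
  ∀ B : Set (Finset ℕ), IsBarrier B → ∀ f : Finset ℕ → Q, GoodPair le B f

/-- A quasi-order is well-quasi-ordered if it has no infinite strictly descending sequence
and no infinite antichain. -/
def IsWqo {Q : Type*} (le : Q → Q → Prop) : Prop :=
  (¬ ∃ f : ℕ → Q, ∀ n, le (f (n + 1)) (f n) ∧ ¬ le (f n) (f (n + 1))) ∧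
    ¬ ∃ f : ℕ → Q, ∀ m n : ℕ, m ≠ n → ¬ le (f m) (f n)

/-- The strict lexicographic order on finite subsets of `ℕ` (via increasing enumerations;
a proper initial segment is lexicographically smaller). -/
def lexLT (s t : Finset ℕ) : Prop :=
  List.Lex (· < ·) (s.sort (· ≤ ·)) (t.sort (· ≤ ·))

/-- The order type of `B` under the lexicographic order is at most `α`: there is a
map of `B` into the ordinals `< α` which is strictly increasing w.r.t. `lexLT`. -/
def TypeLE (B : Set (Finset ℕ)) (α : Ordinal) : Prop :=
  ∃ g : Finset ℕ → Ordinal, (∀ s ∈ B, g s < α) ∧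
    ∀ s ∈ B, ∀ t ∈ B, lexLT s t → g s < g t

/-- A quasi-order is `α`-better-quasi-ordered if every map from a barrier of order type
at most `α` into it is good. -/
def IsAlphaBqo (α : Ordinal) {Q : Type*} (le : Q → Q → Prop) : Prop :=
  ∀ B : Set (Finset ℕ), IsBarrier B → TypeLE B α →
    ∀ f : Finset ℕ → Q, GoodPair le B f

/-- Domination quasi-order on subsets of a quasi-ordered set. -/
def DomRel {Q : Type*} (le : Q → Q → Prop) (A B : Set Q) : Prop :=
  ∀ a ∈ A, ∃ b ∈ B, le a b

/-- `I` is an ideal: nonempty, downward closed and up-directed. -/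
def IsIdealRel {Q : Type*} (le : Q → Q → Prop) (I : Set Q) : Prop :=
  I.Nonempty ∧ (∀ x y, le x y → y ∈ I → x ∈ I) ∧
    ∀ x ∈ I, ∀ y ∈ I, ∃ z ∈ I, le x z ∧ le y z

/-- `I` is principal: it has a greatest element. -/
def IsPrincipalRel {Q : Type*} (le : Q → Q → Prop) (I : Set Q) : Prop :=
  ∃ a ∈ I, ∀ x ∈ I, le x a

/-- A maximal antichain: an antichain not properly contained in any other antichain. -/
def IsMaxAntichainRel {Q : Type*} (le : Q → Q → Prop) (A : Set Q) : Prop :=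
  IsAntichain le A ∧ ∀ B : Set Q, IsAntichain le B → A ⊆ B → A = B

/-- An interval order: no `a < b`, `c < d` with each of `a, b` incomparable to each
of `c, d`. -/
def IsIntervalOrder (P : Type*) [Preorder P] : Prop :=
  ¬ ∃ a b c d : P, a < b ∧ c < d ∧
    ¬ a ≤ c ∧ ¬ c ≤ a ∧ ¬ a ≤ d ∧ ¬ d ≤ a ∧
    ¬ b ≤ c ∧ ¬ c ≤ b ∧ ¬ b ≤ d ∧ ¬ d ≤ b

/-- `a ≤_pred b` iff every strict predecessor of `a` is a strict predecessor of `b`. -/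
def predLE {P : Type*} [PartialOrder P] (a b : P) : Prop := ∀ x, x < a → x < b

/-- `a ≤_succ b` iff every strict successor of `b` is a strict successor of `a`. -/
def succLE {P : Type*} [PartialOrder P] (a b : P) : Prop := ∀ y, b < y → a < y

/-- `a ≤_crit b` iff `a ≤_pred b` and `a ≤_succ b`. -/
def critLE {P : Type*} [PartialOrder P] (a b : P) : Prop := predLE a b ∧ succLE a b

private lemma lex_append_iff' (p l1 l2 : List ℕ) :
    List.Lex (· < ·) (p ++ l1) (p ++ l2) ↔ List.Lex (· < ·) l1 l2 := by
  induction p with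
  | nil => simp
  | cons a p ih => simpa [List.lex_cons_iff] using ih

private lemma not_lex_self_append' (p l : List ℕ) : ¬ List.Lex (· < ·) (p ++ l) p := by
  induction p with
  | nil => exact List.not_lex_nil
  | cons a p ih => simpa [List.lex_cons_iff] using ih

private lemma sort_inj' {s t : Finset ℕ} (h : s.sort (· ≤ ·) = t.sort (· ≤ ·)) : s = t := by
  ext x
  rw [← Finset.mem_sort (α := ℕ) (· ≤ ·), h, Finset.mem_sort]

private lemma lexLT_trichotomy' {s t : Finset ℕ} (h : s ≠ t) : lexLT s t ∨ lexLT t s := by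
  rcases trichotomous (r := List.Lex ((· < ·) : ℕ → ℕ → Prop)) (s.sort (· ≤ ·)) (t.sort (· ≤ ·))
    with h1 | h1 | h1
  · exact Or.inl h1
  · exact absurd (sort_inj' h1) h
  · exact Or.inr h1

private lemma thin_mem_ne_empty' {B : Set (Finset ℕ)} (hB : IsThinBlock B) :
    ∀ s ∈ B, s ≠ ∅ := by
  intro s hs hse
  subst hse
  have hsub : B ⊆ {∅} := by
    intro t ht
    have : InitSeg ∅ t := ⟨Finset.empty_subset t, by simp⟩
    exact (hB.2 ∅ hs t ht this).symm
  exact hB.1.1 ((Set.finite_singleton ∅).subset hsub)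

private lemma take_succ_getD' (l : List ℕ) (k : ℕ) (h : k < l.length) :
    l.take (k + 1) = l.take k ++ [l.getD k 0] := by
  rw [List.take_succ, List.getElem?_eq_getElem h, List.getD_eq_getElem l 0 h]
  simp

private lemma lex_head_le' {a b : ℕ} {l1 l2 : List ℕ}
    (h : List.Lex (· < ·) (a :: l1) (b :: l2)) : a ≤ b := by
  cases h with
  | rel h => exact le_of_lt h
  | cons h => exact le_rfl

private lemma no_descending' {B : Set (Finset ℕ)} (hB : IsThinBlock B)
    (f : ℕ → Finset ℕ) (hfB : ∀ n, f n ∈ B) (hf : ∀ n, lexLT (f (n + 1)) (f n)) : False := by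
  set L : ℕ → List ℕ := fun n => (f n).sort (· ≤ ·) with hL
  have hne : ∀ n, 0 < (L n).length := by
    intro n
    simp only [hL, Finset.length_sort]
    exact Finset.card_pos.mpr
      (Finset.nonempty_iff_ne_empty.mpr (thin_mem_ne_empty' hB (f n) (hfB n)))
  have key : ∀ k, ∃ N, ∀ n, N ≤ n → k < (L n).length ∧ (L n).take k = (L N).take k := by
    intro k
    induction k with
    | zero => exact ⟨0, fun n _ => ⟨hne n, by simp⟩⟩
    | succ k ih =>
      obtain ⟨N, hN⟩ := ih
      have hdget : ∀ n, N ≤ n →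
          (L n).drop k = (L n).getD k 0 :: (L n).drop (k + 1) := by
        intro n hn
        rw [List.drop_eq_getElem_cons (hN n hn).1,
          List.getD_eq_getElem (L n) 0 (hN n hn).1]
      have hlexdrop : ∀ n, N ≤ n → List.Lex (· < ·) ((L (n+1)).drop k) ((L n).drop k) := by
        intro n hn
        have h1 : List.Lex (· < ·) (L (n+1)) (L n) := hf n
        have e1 : (L (n+1)).take k ++ (L (n+1)).drop k = L (n+1) := List.take_append_drop k _
        have e2 : (L n).take k ++ (L n).drop k = L n := List.take_append_drop k _
        have e3 : (L (n+1)).take k = (L n).take k := by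
          rw [(hN (n+1) (by omega)).2, (hN n hn).2]
        rw [← e1, ← e2, e3, lex_append_iff'] at h1
        exact h1
      have hdstep : ∀ n, N ≤ n → (L (n+1)).getD k 0 ≤ (L n).getD k 0 := by
        intro n hn
        have h1 := hlexdrop n hn
        rw [hdget n hn, hdget (n+1) (by omega)] at h1
        exact lex_head_le' h1
      have hanti : ∀ m n, N ≤ m → m ≤ n → (L n).getD k 0 ≤ (L m).getD k 0 := by
        intro m n hm
        induction n with
        | zero => intro hmn; have hm0 : m = 0 := by omega
                  subst hm0; exact le_rfl
        | succ n ih2 =>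
          intro hmn
          rcases Nat.lt_succ_iff_lt_or_eq.mp (Nat.lt_succ_of_le hmn) with h' | h'
          · exact le_trans (hdstep n (by omega)) (ih2 (by omega))
          · subst h'; exact le_rfl
      obtain ⟨v, ⟨M, hMN, rfl⟩, hmin⟩ := Nat.lt_wfRel.wf.has_min
        {v | ∃ n, N ≤ n ∧ (L n).getD k 0 = v} ⟨(L N).getD k 0, N, le_rfl, rfl⟩
      have hconst : ∀ n, M ≤ n → (L n).getD k 0 = (L M).getD k 0 := by
        intro n hn
        have h1 : (L n).getD k 0 ≤ (L M).getD k 0 := hanti M n hMN hn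
        have h2 : ¬ (L n).getD k 0 < (L M).getD k 0 :=
          hmin ((L n).getD k 0) ⟨n, le_trans hMN hn, rfl⟩
        omega
      have hlen : ∀ n, M ≤ n → k + 1 < (L n).length := by
        intro n hn
        by_contra hcon
        have hk : k < (L n).length := (hN n (le_trans hMN hn)).1
        have hlen' : (L n).length = k + 1 := by omega
        have hLn : L n = (L n).take k ++ [(L n).getD k 0] := by
          conv_lhs => rw [← List.take_append_drop k (L n)]
          rw [hdget n (le_trans hMN hn), List.drop_eq_nil_of_le (by omega)]
        have htk : (L (n+1)).take (k+1) = L n := by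
          rw [take_succ_getD' (L (n+1)) k (hN (n+1) (by omega)).1]
          have e5 : (L (n+1)).take k = (L n).take k := by
            rw [(hN (n+1) (by omega)).2, (hN n (le_trans hMN hn)).2]
          rw [e5, hconst (n+1) (by omega), ← hconst n hn]
          exact hLn.symm
        have h6 : List.Lex (· < ·) ((L (n+1)).take (k+1) ++ (L (n+1)).drop (k+1)) (L n) := by
          rw [List.take_append_drop]; exact hf n
        rw [htk] at h6
        exact not_lex_self_append' (L n) _ h6
      refine ⟨M, fun n hn => ⟨hlen n hn, ?_⟩⟩
      rw [take_succ_getD' (L n) k (hN n (le_trans hMN hn)).1,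
        take_succ_getD' (L M) k (hN M hMN).1]
      have e3 : (L n).take k = (L M).take k := by
        rw [(hN n (le_trans hMN hn)).2, (hN M hMN).2]
      rw [e3, hconst n hn]
  choose N hN using fun k => key (k + 1)
  set a : ℕ → ℕ := fun k => (L (N k)).getD k 0 with ha
  have haval : ∀ k n, N k ≤ n → ∃ hkn : k < (L n).length, (L n)[k] = a k := by
    intro k n hn
    have h1 := hN k n hn
    have hkn : k < (L n).length := by omega
    have hkM : k < (L (N k)).length := by have := hN k (N k) le_rfl; omega
    refine ⟨hkn, ?_⟩
    show (L n)[k] = (L (N k)).getD k 0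
    rw [List.getD_eq_getElem (L (N k)) 0 hkM]
    have e : (L n).take (k+1) = (L (N k)).take (k+1) := h1.2
    have h2 : ((L n).take (k+1))[k]'(by simp; omega) =
        ((L (N k)).take (k+1))[k]'(by simp; omega) := by
      simp only [e]
    simpa using h2
  have hamono : StrictMono a := by
    have hstep : ∀ k, a k < a (k + 1) := by
      intro k
      obtain ⟨hk1, hv1⟩ := haval k (max (N k) (N (k + 1))) (le_max_left _ _)
      obtain ⟨hk2, hv2⟩ := haval (k + 1) (max (N k) (N (k + 1))) (le_max_right _ _)
      rw [← hv1, ← hv2]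
      have hsorted : (L (max (N k) (N (k + 1)))).SortedLT := Finset.sortedLT_sort _
      exact List.SortedLT.strictMono_get hsorted
        (show (⟨k, hk1⟩ : Fin _) < ⟨k+1, hk2⟩ by simp [Fin.lt_def])
    exact strictMono_nat_of_lt_succ hstep
  have hamem : ∀ k n, N k ≤ n → a k ∈ f n := by
    intro k n hn
    obtain ⟨hk, hv⟩ := haval k n hn
    rw [← hv, ← Finset.mem_sort (α := ℕ) (· ≤ ·)]
    exact List.getElem_mem hk
  have hXsub : Set.range a ⊆ unionOf B := by
    rintro x ⟨k, rfl⟩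
    exact Set.mem_biUnion (hfB (N k)) (hamem k (N k) le_rfl)
  have hXinf : (Set.range a).Infinite := Set.infinite_range_of_injective hamono.injective
  obtain ⟨t, htB, htne, htsub, htlt⟩ := hB.1.2 (Set.range a) hXsub hXinf
  have hIdc : ∀ i i', i' ≤ i → a i ∈ t → a i' ∈ t := by
    intro i i' hle hmem
    by_contra hcon
    have h1 : a i < a i' := htlt (a i) hmem (a i') ⟨i', rfl⟩ hcon
    have := hamono.lt_iff_lt.mp h1
    omega
  have hIbd : ∃ m, ∀ i, a i ∈ t → i < m := by
    by_contra hcon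
    push_neg at hcon
    have hall : ∀ i, a i ∈ t := by
      intro i
      obtain ⟨i', hi', hle⟩ := hcon (i + 1)
      exact hIdc i' i (by omega) hi'
    exact Set.infinite_of_injective_forall_mem hamono.injective hall t.finite_toSet
  obtain ⟨m, hm⟩ := hIbd
  set Nm := (Finset.range m).sup N with hNm
  have hNle : ∀ i, i < m → N i ≤ Nm := fun i hi =>
    Finset.le_sup (Finset.mem_range.mpr hi)
  have hinit : ∀ n, Nm ≤ n → InitSeg t (f n) := by
    intro n hn
    have hmemidx : ∀ x ∈ t, ∃ i, i < m ∧ a i = x := by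
      intro x hx
      obtain ⟨i, rfl⟩ := htsub hx
      exact ⟨i, hm i hx, rfl⟩
    constructor
    · intro x hx
      obtain ⟨i, him, rfl⟩ := hmemidx x hx
      exact hamem i n (le_trans (hNle i him) hn)
    · intro x hx y hy hyt
      obtain ⟨i, him, rfl⟩ := hmemidx x hx
      rw [← Finset.mem_sort (α := ℕ) (· ≤ ·)] at hy
      obtain ⟨⟨q, hq⟩, rfl⟩ := List.mem_iff_get.mp hy
      simp only [List.get_eq_getElem]
      by_cases hqi : q ≤ i
      · exfalso
        have hqm : q < m := by omega
        obtain ⟨hq', hv⟩ := haval q n (le_trans (hNle q hqm) hn)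
        have hyt' : (L n)[q] ∉ t := hyt
        rw [hv] at hyt'
        exact hyt' (hIdc i q hqi hx)
      · obtain ⟨hi', hv⟩ := haval i n (le_trans (hNle i him) hn)
        have hgoal : (L n)[i] < (L n)[q] := by
          have hsorted : (L n).SortedLT := Finset.sortedLT_sort _
          exact List.SortedLT.strictMono_get hsorted
            (show (⟨i, hi'⟩ : Fin _) < ⟨q, hq⟩ by simp only [Fin.lt_def]; omega)
        rw [hv] at hgoal
        exact hgoal
  have he1 : t = f Nm := hB.2 t htB (f Nm) (hfB Nm) (hinit Nm le_rfl)
  have he2 : t = f (Nm + 1) := hB.2 t htB (f (Nm + 1)) (hfB (Nm + 1)) (hinit (Nm + 1) (by omega))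
  have h1 : List.Lex (· < ·) (L (Nm + 1)) (L Nm) := hf Nm
  rw [hL] at h1
  simp only [← he1, ← he2] at h1
  exact irrefl _ h1

/-- Every thin block is well-ordered by the lexicographic order; in particular every
barrier is well-ordered by the lexicographic order. -/
theorem stmt8 :
    (∀ B : Set (Finset ℕ), IsThinBlock B →
      ∀ C : Set (Finset ℕ), C ⊆ B → C.Nonempty → ∃ s ∈ C, ∀ t ∈ C, s = t ∨ lexLT s t) ∧
    (∀ B : Set (Finset ℕ), IsBarrier B →
      ∀ C : Set (Finset ℕ), C ⊆ B → C.Nonempty → ∃ s ∈ C, ∀ t ∈ C, s = t ∨ lexLT s t) := by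
  have main : ∀ B : Set (Finset ℕ), IsThinBlock B →
      ∀ C : Set (Finset ℕ), C ⊆ B → C.Nonempty → ∃ s ∈ C, ∀ t ∈ C, s = t ∨ lexLT s t := by
    intro B hB C hCB hCne
    by_contra hcon
    push_neg at hcon
    have hstep : ∀ s : C, ∃ u : C, lexLT (u : Finset ℕ) (s : Finset ℕ) := by
      rintro ⟨s, hs⟩
      obtain ⟨u, hu, hne, hnlt⟩ := hcon s hs
      rcases lexLT_trichotomy' hne with h | h
      · exact absurd h hnlt
      · exact ⟨⟨u, hu⟩, h⟩
    choose g hg using hstep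
    obtain ⟨s0, hs0⟩ := hCne
    set F : ℕ → C := fun n => g^[n] ⟨s0, hs0⟩ with hF
    have hFd : ∀ n, lexLT ((F (n + 1)) : Finset ℕ) ((F n) : Finset ℕ) := by
      intro n
      rw [hF]
      simp only [Function.iterate_succ_apply']
      exact hg _
    exact no_descending' hB (fun n => (F n : Finset ℕ)) (fun n => hCB (F n).2) hFd
  refine ⟨main, fun B hB => main B ⟨hB.1, fun s hs t ht hst => hB.2 s hs t ht hst.1⟩⟩
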